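/- Let L ∈ ℝ^{k×n} have full row rank k and A ∈ ℝ^{n×n}. If for every differentiable solution x of x' = A x the function y = L x satisfies y' = (L A L⁺) y, then L A = (L A L⁺) L, i.e., rowspan(LA) ⊆ rowspan(L). -/

import Mathlib

open NormedSpace

attribute [local instance] Matrix.linftyOpNormedRing Matrix.linftyOpNormedAlgebra

lemma exp_sol {n : ℕ} (A : Matrix (Fin n) (Fin n) ℝ) (v : Fin n → ℝ) (t : ℝ) :
    HasDerivAt (fun s : ℝ => (exp (s • A)).mulVec v)
      (A.mulVec ((exp (t • A)).mulVec v)) t := by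
  have hd := hasDerivAt_exp_smul_const' (𝕂 := ℝ) A t
  let clm : Matrix (Fin n) (Fin n) ℝ →L[ℝ] (Fin n → ℝ) :=
    LinearMap.toContinuousLinearMap
      { toFun := fun M => M.mulVec v
        map_add' := fun M N => Matrix.add_mulVec M N v
        map_smul' := fun c M => Matrix.smul_mulVec c M v }
  have := clm.hasFDerivAt.comp_hasDerivAt t hd
  simp only [Function.comp_def] at this
  rw [Matrix.mulVec_mulVec]
  exact this

/-- Generalized right inverse `L⁺ = Lᵀ (L Lᵀ)⁻¹`. -/
noncomputable def pinv {k n : ℕ} (L : Matrix (Fin k) (Fin n) ℝ) :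
    Matrix (Fin n) (Fin k) ℝ :=
  L.transpose * (L * L.transpose)⁻¹

theorem lumping_of_trajectory_preservation {k n : ℕ}
    (L : Matrix (Fin k) (Fin n) ℝ) (hrank : L.rank = k)
    (A : Matrix (Fin n) (Fin n) ℝ)
    (h : ∀ x : ℝ → Fin n → ℝ,
      (∀ t : ℝ, HasDerivAt x (A.mulVec (x t)) t) →
      ∀ t : ℝ, HasDerivAt (fun s => L.mulVec (x s))
        ((L * A * pinv L).mulVec (L.mulVec (x t))) t) :
    L * A = (L * A * pinv L) * L := by
  have key : ∀ v : Fin n → ℝ,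
      (L * A).mulVec v = ((L * A * pinv L) * L).mulVec v := by
    intro v
    set x : ℝ → Fin n → ℝ := fun s => (exp (s • A)).mulVec v with hx
    have hsol : ∀ t : ℝ, HasDerivAt x (A.mulVec (x t)) t := fun t => exp_sol A v t
    have h1 := h x hsol 0
    -- direct derivative via linearity of L.mulVec
    let clm : (Fin n → ℝ) →L[ℝ] (Fin k → ℝ) :=
      LinearMap.toContinuousLinearMap L.mulVecLin
    have h2 : HasDerivAt (fun s => L.mulVec (x s)) (L.mulVec (A.mulVec (x 0))) 0 := by
      simpa [clm, Function.comp_def] using clm.hasFDerivAt.comp_hasDerivAt 0 (hsol 0)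
    have heq := h2.unique h1
    have hx0 : x 0 = v := by simp [hx, exp_zero]
    rw [hx0] at heq
    simpa [Matrix.mulVec_mulVec] using heq
  ext i j
  have H := congrFun (key (Pi.single j 1)) i
  simpa [Matrix.mulVec_single] using H
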